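/- In U_q(sl3), for every l ≥ 1: E_1 (\hat{F}_3[a])^l = (\hat{F}_3[a+1])^l E_1 + ((q^l - q^{-l})/(q - q^{-1})) F_2 (\hat{F}_3[a])^{l-1} (q^{a+2-l} K_1 K_2 - q^{-a-2+l}(K_1 K_2)^{-1})/(q - q^{-1}). -/

import Mathlib

noncomputable section

/-- The defining relations of `U_q(sl3)` inside an `ℝ`-algebra `R`:
generators `E₁ E₂ F₁ F₂` and `K₁ K₂` with inverses `K₁' K₂'`. -/
structure UqSL3 (R : Type*) [Ring R] [Algebra ℝ R] (q : ℝ)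
    (E₁ E₂ F₁ F₂ K₁ K₁' K₂ K₂' : R) : Prop where
  K₁mul : K₁ * K₁' = 1
  K₁mul' : K₁' * K₁ = 1
  K₂mul : K₂ * K₂' = 1
  K₂mul' : K₂' * K₂ = 1
  Kcomm : K₁ * K₂ = K₂ * K₁
  Kcomm' : K₁ * K₂' = K₂' * K₁
  Kcomm'' : K₁' * K₂ = K₂ * K₁'
  KE11 : K₁ * E₁ = (q ^ (2:ℤ)) • (E₁ * K₁)
  KE12 : K₁ * E₂ = (q ^ (-1:ℤ)) • (E₂ * K₁)
  KE21 : K₂ * E₁ = (q ^ (-1:ℤ)) • (E₁ * K₂)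
  KE22 : K₂ * E₂ = (q ^ (2:ℤ)) • (E₂ * K₂)
  KF11 : K₁ * F₁ = (q ^ (-2:ℤ)) • (F₁ * K₁)
  KF12 : K₁ * F₂ = (q ^ (1:ℤ)) • (F₂ * K₁)
  KF21 : K₂ * F₁ = (q ^ (1:ℤ)) • (F₁ * K₂)
  KF22 : K₂ * F₂ = (q ^ (-2:ℤ)) • (F₂ * K₂)
  EF11 : E₁ * F₁ - F₁ * E₁ = (q - q⁻¹)⁻¹ • (K₁ - K₁')
  EF22 : E₂ * F₂ - F₂ * E₂ = (q - q⁻¹)⁻¹ • (K₂ - K₂')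
  EF12 : E₁ * F₂ = F₂ * E₁
  EF21 : E₂ * F₁ = F₁ * E₂
  serreE₁ : E₁ ^ 2 * E₂ - (q + q⁻¹) • (E₁ * E₂ * E₁) + E₂ * E₁ ^ 2 = 0
  serreE₂ : E₂ ^ 2 * E₁ - (q + q⁻¹) • (E₂ * E₁ * E₂) + E₁ * E₂ ^ 2 = 0
  serreF₁ : F₁ ^ 2 * F₂ - (q + q⁻¹) • (F₁ * F₂ * F₁) + F₂ * F₁ ^ 2 = 0
  serreF₂ : F₂ ^ 2 * F₁ - (q + q⁻¹) • (F₂ * F₁ * F₂) + F₁ * F₂ ^ 2 = 0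

/-- `F̂₃[a] = F₁F₂ (q^{a+1}K₂ - q^{-a-1}K₂⁻¹)/(q-q⁻¹) - F₂F₁ (q^a K₂ - q^{-a}K₂⁻¹)/(q-q⁻¹)`. -/
def hatF₃ {R : Type*} [Ring R] [Algebra ℝ R] (q a : ℝ) (F₁ F₂ K₂ K₂' : R) : R :=
  (q - q⁻¹)⁻¹ • (F₁ * F₂ * (q ^ (a + 1) • K₂ - q ^ (-(a + 1)) • K₂')
    - F₂ * F₁ * (q ^ a • K₂ - q ^ (-a) • K₂'))

set_option linter.unusedSectionVars false

section helpers
variable {R : Type*} [Ring R] [Algebra ℝ R]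

/-- trailing version of a scaled commutation relation -/
lemma comm_tt {X Y : R} {c : ℝ} (hxy : X * Y = c • (Y * X)) (x : R) :
    X * (Y * x) = c • (Y * (X * x)) := by
  rw [← mul_assoc, hxy, smul_mul_assoc, mul_assoc]

lemma comm_tt1 {X Y : R} (hxy : X * Y = Y * X) (x : R) :
    X * (Y * x) = Y * (X * x) := by
  rw [← mul_assoc, hxy, mul_assoc]

lemma flip_comm {X Y : R} {c : ℝ} (hc : c ≠ 0) (hxy : X * Y = c • (Y * X)) :
    Y * X = c⁻¹ • (X * Y) := by
  rw [hxy, smul_smul, inv_mul_cancel₀ hc, one_smul]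

/-- from `K * X = c • (X * K)` deduce `K' * X = c⁻¹ • (X * K')` where `K'` is inverse to `K`. -/
lemma invpart {X K K' : R} {c : ℝ} (hc : c ≠ 0) (h1 : K * K' = 1) (h2 : K' * K = 1)
    (hxy : K * X = c • (X * K)) : K' * X = c⁻¹ • (X * K') := by
  have e : c • (K' * X) = X * K' := by
    calc c • (K' * X) = c • (K' * (X * (K * K'))) := by rw [h1, mul_one]
      _ = K' * ((c • (X * K)) * K') := by
          rw [smul_mul_assoc, mul_smul_comm, mul_assoc]
      _ = K' * (K * (X * K')) := by rw [← hxy, mul_assoc]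
      _ = (K' * K) * (X * K') := by rw [mul_assoc]
      _ = X * K' := by rw [h2, one_mul]
  rw [← e, smul_smul, inv_mul_cancel₀ hc, one_smul]

lemma cancel_tt {K K' : R} (hKK' : K * K' = 1) (x : R) : K * (K' * x) = x := by
  rw [← mul_assoc, hKK', one_mul]

end helpers

def Wel {R : Type*} [Ring R] [Algebra ℝ R] (q b : ℝ) (K₁ K₁' K₂ K₂' : R) : R :=
  (q - q⁻¹)⁻¹ • (q ^ b • (K₁ * K₂) - q ^ (-b) • (K₂' * K₁'))

section derived
variable {R : Type*} [Ring R] [Algebra ℝ R] {q : ℝ} (hq0 : 0 < q) (hq1 : q < 1)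
    {E₁ E₂ F₁ F₂ K₁ K₁' K₂ K₂' : R}
    (h : UqSL3 R q E₁ E₂ F₁ F₂ K₁ K₁' K₂ K₂')

include hq0 h

lemma hqne : q ≠ 0 := hq0.ne'
lemma hqqne : q * q ≠ 0 := mul_ne_zero hq0.ne' hq0.ne'

include hq1 in
lemma hsne : q - q⁻¹ ≠ 0 := by
  have h1 : q * q < 1 := by nlinarith
  intro he
  have h2 : q = q⁻¹ := by linarith [sub_eq_zero.mp he]
  have h3 : q * q = 1 := by nth_rewrite 2 [h2]; exact mul_inv_cancel₀ hq0.ne'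
  linarith

-- base scaled relations, oriented to move the left letter rightwards
lemma b1 : K₁ * F₁ = (q*q)⁻¹ • (F₁ * K₁) := by
  have := h.KF11; rwa [show (q:ℝ)^(-2:ℤ) = (q*q)⁻¹ by rw [zpow_neg]; norm_num [sq, zpow_two]] at this

lemma b2 : K₁ * F₂ = q • (F₂ * K₁) := by
  have := h.KF12; rwa [zpow_one] at this

lemma b3 : K₂ * F₁ = q • (F₁ * K₂) := by
  have := h.KF21; rwa [zpow_one] at this

lemma b4 : K₂ * F₂ = (q*q)⁻¹ • (F₂ * K₂) := by
  have := h.KF22; rwa [show (q:ℝ)^(-2:ℤ) = (q*q)⁻¹ by rw [zpow_neg]; norm_num [sq, zpow_two]] at this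

lemma b5 : K₁' * F₁ = (q*q) • (F₁ * K₁') := by
  have := invpart (inv_ne_zero (hqqne hq0 h)) h.K₁mul h.K₁mul' (b1 hq0 h)
  rwa [inv_inv] at this

lemma b6 : K₁' * F₂ = q⁻¹ • (F₂ * K₁') := invpart (hqne hq0 h) h.K₁mul h.K₁mul' (b2 hq0 h)

lemma b7 : K₂' * F₁ = q⁻¹ • (F₁ * K₂') := invpart (hqne hq0 h) h.K₂mul h.K₂mul' (b3 hq0 h)

lemma b8 : K₂' * F₂ = (q*q) • (F₂ * K₂') := by
  have := invpart (inv_ne_zero (hqqne hq0 h)) h.K₂mul h.K₂mul' (b4 hq0 h)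
  rwa [inv_inv] at this

-- K-K swaps oriented by the order K₁ < K₂ < K₂' < K₁'
lemma b9 : K₂ * K₁ = K₁ * K₂ := h.Kcomm.symm
lemma b10 : K₂' * K₁ = K₁ * K₂' := h.Kcomm'.symm
lemma b11 : K₁' * K₂ = K₂ * K₁' := h.Kcomm''
lemma b12 : K₁' * K₂' = K₂' * K₁' := by
  calc K₁' * K₂' = K₁' * K₂' * (K₁ * K₁') := by rw [h.K₁mul, mul_one]
    _ = K₁' * (K₂' * K₁) * K₁' := by rw [mul_assoc, ← mul_assoc K₂', ← mul_assoc]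
    _ = K₁' * (K₁ * K₂') * K₁' := by rw [h.Kcomm']
    _ = (K₁' * K₁) * (K₂' * K₁') := by rw [← mul_assoc, mul_assoc K₁' K₁, ← mul_assoc, ← mul_assoc]
    _ = K₂' * K₁' := by rw [h.K₁mul', one_mul]

-- E₁ relations
lemma e2 : E₁ * F₂ = F₂ * E₁ := h.EF12

lemma e3 : E₁ * K₂ = q • (K₂ * E₁) := by
  have h1 := flip_comm (zpow_ne_zero _ hq0.ne') h.KE21
  rwa [show ((q:ℝ)^(-1:ℤ))⁻¹ = q by rw [zpow_neg, zpow_one, inv_inv]] at h1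

lemma e4 : E₁ * K₂' = q⁻¹ • (K₂' * E₁) := by
  have h2 := invpart (zpow_ne_zero (-1) hq0.ne') h.K₂mul h.K₂mul' h.KE21
  rw [show ((q:ℝ)^(-1:ℤ))⁻¹ = q by rw [zpow_neg, zpow_one, inv_inv]] at h2
  exact flip_comm hq0.ne' h2

lemma e1 (x : R) : E₁ * (F₁ * x)
    = F₁ * (E₁ * x) + (q - q⁻¹)⁻¹ • (K₁ * x) - (q - q⁻¹)⁻¹ • (K₁' * x) := by
  have h1 : E₁ * F₁ = F₁ * E₁ + (q - q⁻¹)⁻¹ • K₁ - (q - q⁻¹)⁻¹ • K₁' := by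
    have := h.EF11
    rw [smul_sub] at this
    linear_combination (norm := noncomm_ring) this
  calc E₁ * (F₁ * x) = (E₁ * F₁) * x := by rw [mul_assoc]
    _ = _ := by rw [h1]; noncomm_ring

include hq1 in
lemma L1 (a : ℝ) :
    E₁ * hatF₃ q a F₁ F₂ K₂ K₂'
      = hatF₃ q (a+1) F₁ F₂ K₂ K₂' * E₁ + F₂ * Wel q (a+1) K₁ K₁' K₂ K₂' := by
  have hs := hsne hq0 hq1 h
  have hqa : q ^ a ≠ 0 := (Real.rpow_pos_of_pos hq0 a).ne'
  simp only [hatF₃, Wel]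
  simp only [mul_sub, sub_mul, mul_add, add_mul, smul_sub, smul_add, smul_mul_assoc,
    mul_smul_comm, smul_smul, mul_assoc,
    e1 hq0 h, e2 hq0 h, comm_tt1 (e2 hq0 h), e3 hq0 h, comm_tt (e3 hq0 h),
    e4 hq0 h, comm_tt (e4 hq0 h),
    b2 hq0 h, comm_tt (b2 hq0 h), b6 hq0 h, comm_tt (b6 hq0 h),
    b12 hq0 h, comm_tt1 (b12 hq0 h)]
  have hq21 : q^2 - 1 ≠ 0 := by nlinarith
  have hrep : (q - q⁻¹)⁻¹ = q * (q^2-1)⁻¹ := by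
    have h5 : q - q⁻¹ = (q^2-1) * q⁻¹ := by field_simp
    rw [h5, mul_inv_rev, inv_inv]
  match_scalars
  all_goals try simp only [Real.rpow_add hq0, Real.rpow_neg hq0.le, Real.rpow_one, hrep]
  all_goals try field_simp
  all_goals try ring

lemma serre2 (x : R) : F₂ * (F₂ * (F₁ * x))
    = (q+q⁻¹) • (F₂ * (F₁ * (F₂ * x))) - F₁ * (F₂ * (F₂ * x)) := by
  have e0 : F₂ * (F₂ * (F₁ * x)) - (q+q⁻¹) • (F₂ * (F₁ * (F₂ * x))) + F₁ * (F₂ * (F₂ * x)) = 0 := by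
    have e1 := congrArg (· * x) h.serreF₂
    simpa only [sub_mul, add_mul, smul_mul_assoc, mul_assoc, sq, zero_mul] using e1
  rw [sub_add_eq_add_sub, sub_eq_zero] at e0
  exact eq_sub_of_add_eq e0

include hq1 in
lemma L2 (a : ℝ) :
    F₂ * hatF₃ q a F₁ F₂ K₂ K₂' = hatF₃ q (a+1) F₁ F₂ K₂ K₂' * F₂ := by
  have hs := hsne hq0 hq1 h
  have hqa : q ^ a ≠ 0 := (Real.rpow_pos_of_pos hq0 a).ne'
  have hq21 : q^2 - 1 ≠ 0 := by nlinarith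
  have hrep : (q - q⁻¹)⁻¹ = q * (q^2-1)⁻¹ := by
    have h5 : q - q⁻¹ = (q^2-1) * q⁻¹ := by field_simp
    rw [h5, mul_inv_rev, inv_inv]
  simp only [hatF₃]
  simp only [mul_sub, sub_mul, mul_add, add_mul, smul_sub, smul_add, smul_mul_assoc,
    mul_smul_comm, smul_smul, mul_assoc, serre2 hq0 h,
    b4 hq0 h, comm_tt (b4 hq0 h), b8 hq0 h, comm_tt (b8 hq0 h)]
  match_scalars
  all_goals try simp only [Real.rpow_add hq0, Real.rpow_neg hq0.le, Real.rpow_one, hrep]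
  all_goals try field_simp
  all_goals try ring

set_option maxHeartbeats 2000000 in
include hq1 in
lemma Wstep (a b : ℝ) :
    Wel q b K₁ K₁' K₂ K₂' * hatF₃ q a F₁ F₂ K₂ K₂'
      = hatF₃ q a F₁ F₂ K₂ K₂' * Wel q (b-2) K₁ K₁' K₂ K₂' := by
  have hs := hsne hq0 hq1 h
  have hqa : q ^ a ≠ 0 := (Real.rpow_pos_of_pos hq0 a).ne'
  have hqb : q ^ b ≠ 0 := (Real.rpow_pos_of_pos hq0 b).ne'
  have hq21 : q^2 - 1 ≠ 0 := by nlinarith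
  have hrep : (q - q⁻¹)⁻¹ = q * (q^2-1)⁻¹ := by
    have h5 : q - q⁻¹ = (q^2-1) * q⁻¹ := by field_simp
    rw [h5, mul_inv_rev, inv_inv]
  have eb1 : q ^ (b-2) = q^b * (q*q)⁻¹ := by
    rw [show b-2 = b + (-1) + (-1) by ring, Real.rpow_add hq0, Real.rpow_add hq0,
      Real.rpow_neg_one]
    ring
  have eb2 : q ^ (-(b-2)) = (q^b)⁻¹ * (q*q) := by
    rw [show -(b-2) = -b + 1 + 1 by ring, Real.rpow_add hq0, Real.rpow_add hq0,
      Real.rpow_one, Real.rpow_neg hq0.le]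
    ring
  have eb3 : q ^ (-b) = (q^b)⁻¹ := Real.rpow_neg hq0.le b
  simp only [hatF₃, Wel]
  simp only [mul_sub, sub_mul, mul_add, add_mul, smul_sub, smul_add, smul_mul_assoc,
    mul_smul_comm, smul_smul, mul_assoc,
    b1 hq0 h, comm_tt (b1 hq0 h), b2 hq0 h, comm_tt (b2 hq0 h),
    b3 hq0 h, comm_tt (b3 hq0 h), b4 hq0 h, comm_tt (b4 hq0 h),
    b5 hq0 h, comm_tt (b5 hq0 h), b6 hq0 h, comm_tt (b6 hq0 h),
    b7 hq0 h, comm_tt (b7 hq0 h), b8 hq0 h, comm_tt (b8 hq0 h),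
    b9 hq0 h, comm_tt1 (b9 hq0 h), b10 hq0 h, comm_tt1 (b10 hq0 h),
    b11 hq0 h, comm_tt1 (b11 hq0 h), b12 hq0 h, comm_tt1 (b12 hq0 h),
    h.K₂mul, cancel_tt h.K₂mul, h.K₂mul', cancel_tt h.K₂mul',
    h.K₁mul, cancel_tt h.K₁mul, h.K₁mul', cancel_tt h.K₁mul']
  match_scalars
  all_goals try simp only [Real.rpow_add hq0, Real.rpow_neg hq0.le, Real.rpow_one, hrep,
    eb1, eb2, eb3]
  all_goals try field_simp
  all_goals try ring

include hq1 in
lemma Wpow (a b : ℝ) (n : ℕ) :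
    Wel q b K₁ K₁' K₂ K₂' * (hatF₃ q a F₁ F₂ K₂ K₂') ^ n
      = (hatF₃ q a F₁ F₂ K₂ K₂') ^ n * Wel q (b - 2*n) K₁ K₁' K₂ K₂' := by
  induction n with
  | zero => simp
  | succ n ih =>
      rw [pow_succ, ← mul_assoc, ih, mul_assoc, Wstep hq0 hq1 h a (b - 2*n), ← mul_assoc,
        ← pow_succ, show b - 2*(n:ℝ) - 2 = b - 2*((n+1 : ℕ):ℝ) by push_cast; ring]

include hq1 in
lemma Wadd (c1 c2 c3 b1 b2 b3 : ℝ)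
    (h1 : c1 * q^b1 + c2 * q^b2 = c3 * q^b3)
    (h2 : c1 * q^(-b1) + c2 * q^(-b2) = c3 * q^(-b3)) :
    c1 • Wel q b1 K₁ K₁' K₂ K₂' + c2 • Wel q b2 K₁ K₁' K₂ K₂'
      = c3 • Wel q b3 K₁ K₁' K₂ K₂' := by
  simp only [Wel]
  match_scalars
  · linear_combination (q - q⁻¹)⁻¹ * h1
  · linear_combination (-(q - q⁻¹)⁻¹) * h2

end derived


theorem stmt {R : Type*} [Ring R] [Algebra ℝ R] (q : ℝ) (hq0 : 0 < q) (hq1 : q < 1)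
    (E₁ E₂ F₁ F₂ K₁ K₁' K₂ K₂' : R)
    (h : UqSL3 R q E₁ E₂ F₁ F₂ K₁ K₁' K₂ K₂') (a : ℝ) (l : ℕ) (hl : 1 ≤ l) :
    E₁ * (hatF₃ q a F₁ F₂ K₂ K₂') ^ l
      = (hatF₃ q (a + 1) F₁ F₂ K₂ K₂') ^ l * E₁
        + ((q ^ (l:ℤ) - q ^ (-(l:ℤ))) / (q - q⁻¹)) •
          (F₂ * (hatF₃ q a F₁ F₂ K₂ K₂') ^ (l - 1) *
            ((q - q⁻¹)⁻¹ • (q ^ (a + 2 - l) • (K₁ * K₂) - q ^ (-(a + 2 - l)) • (K₂' * K₁')))) := by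
  have hs := hsne hq0 hq1 h
  have hqne' : q ≠ 0 := hq0.ne'
  induction l, hl using Nat.le_induction with
  | base =>
      have hc : ((q ^ ((1:ℕ):ℤ) - q ^ (-((1:ℕ):ℤ)))/(q - q⁻¹)) = 1 := by
        norm_num
        exact hs
      rw [pow_one, pow_one, hc, one_smul, Nat.sub_self, pow_zero, mul_one,
        show a + 2 - ((1:ℕ):ℝ) = a + 1 by push_cast; ring,
        L1 hq0 hq1 h a]
      rfl
  | succ l hl ih =>
      set H := hatF₃ q a F₁ F₂ K₂ K₂' with hH
      set G := hatF₃ q (a+1) F₁ F₂ K₂ K₂' with hG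
      have ihW : E₁ * H ^ l = G ^ l * E₁
          + ((q ^ (l:ℤ) - q ^ (-(l:ℤ)))/(q - q⁻¹)) •
            (F₂ * H ^ (l-1) * Wel q (a + 2 - (l:ℝ)) K₁ K₁' K₂ K₂') := ih
      have hl1 : l - 1 + 1 = l := Nat.succ_pred_eq_of_pos hl
      have hql : (q:ℝ) ^ l ≠ 0 := pow_ne_zero _ hqne'
      have hql1 : (q:ℝ) ^ (l+1) ≠ 0 := pow_ne_zero _ hqne'
      have hqrw : q ^ (a + 2 - ((l+1:ℕ):ℝ)) ≠ 0 := (Real.rpow_pos_of_pos hq0 _).ne'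
      have hqrw2 : q ^ (-(a + 2 - ((l+1:ℕ):ℝ))) ≠ 0 := (Real.rpow_pos_of_pos hq0 _).ne'
      have hq21 : q^2 - 1 ≠ 0 := by nlinarith
      have hrep : (q - q⁻¹)⁻¹ = q * (q^2-1)⁻¹ := by
        have h5 : q - q⁻¹ = (q^2-1) * q⁻¹ := by field_simp
        rw [h5, mul_inv_rev, inv_inv]
      have h1 : ((q ^ (l:ℤ) - q ^ (-(l:ℤ)))/(q - q⁻¹)) * q^(a+2-(l:ℝ))
            + 1 * q^(a+1-2*(l:ℝ))
          = ((q ^ ((l+1:ℕ):ℤ) - q ^ (-((l+1:ℕ):ℤ)))/(q - q⁻¹)) * q^(a+2-((l+1:ℕ):ℝ)) := by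
        rw [show a+2-(l:ℝ) = (a+2-((l+1:ℕ):ℝ))+1 by push_cast; ring,
          show a+1-2*(l:ℝ) = (a+2-((l+1:ℕ):ℝ)) + (-(l:ℝ)) by push_cast; ring,
          Real.rpow_add hq0, Real.rpow_add hq0]
        simp only [Real.rpow_neg hq0.le, Real.rpow_one, Real.rpow_natCast, zpow_natCast,
          zpow_neg, div_eq_mul_inv, hrep]
        field_simp
        ring
      have h2 : ((q ^ (l:ℤ) - q ^ (-(l:ℤ)))/(q - q⁻¹)) * q^(-(a+2-(l:ℝ)))
            + 1 * q^(-(a+1-2*(l:ℝ)))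
          = ((q ^ ((l+1:ℕ):ℤ) - q ^ (-((l+1:ℕ):ℤ)))/(q - q⁻¹)) * q^(-(a+2-((l+1:ℕ):ℝ))) := by
        rw [show -(a+2-(l:ℝ)) = (-(a+2-((l+1:ℕ):ℝ))) + (-1) by push_cast; ring,
          show -(a+1-2*(l:ℝ)) = (-(a+2-((l+1:ℕ):ℝ))) + (l:ℝ) by push_cast; ring,
          Real.rpow_add hq0, Real.rpow_add hq0]
        simp only [Real.rpow_neg hq0.le, Real.rpow_one, Real.rpow_natCast, zpow_natCast,
          zpow_neg, div_eq_mul_inv, hrep]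
        field_simp
        ring
      have hW := Wadd hq0 hq1 h ((q ^ (l:ℤ) - q ^ (-(l:ℤ)))/(q - q⁻¹)) 1
        ((q ^ ((l+1:ℕ):ℤ) - q ^ (-((l+1:ℕ):ℤ)))/(q - q⁻¹))
        (a+2-(l:ℝ)) (a+1-2*(l:ℝ)) (a+2-((l+1:ℕ):ℝ)) h1 h2
      rw [one_smul] at hW
      have main : E₁ * H ^ (l + 1) = G ^ (l + 1) * E₁
          + ((q ^ ((l+1:ℕ):ℤ) - q ^ (-((l+1:ℕ):ℤ)))/(q - q⁻¹)) •
            (F₂ * (H ^ l * Wel q (a + 2 - ((l+1:ℕ):ℝ)) K₁ K₁' K₂ K₂')) := by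
        calc E₁ * H ^ (l + 1) = (E₁ * H) * H ^ l := by rw [pow_succ', ← mul_assoc]
          _ = (G * E₁ + F₂ * Wel q (a+1) K₁ K₁' K₂ K₂') * H ^ l := by
              rw [hH, hG, L1 hq0 hq1 h a]
          _ = G * (E₁ * H ^ l) + F₂ * (Wel q (a+1) K₁ K₁' K₂ K₂' * H ^ l) := by
              rw [add_mul, mul_assoc, mul_assoc]
          _ = G * (G ^ l * E₁
                + ((q ^ (l:ℤ) - q ^ (-(l:ℤ)))/(q - q⁻¹)) •
                  (F₂ * H ^ (l-1) * Wel q (a + 2 - (l:ℝ)) K₁ K₁' K₂ K₂'))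
              + F₂ * (H ^ l * Wel q (a+1-2*(l:ℝ)) K₁ K₁' K₂ K₂') := by
              rw [ihW, hH, Wpow hq0 hq1 h a (a+1) l]
          _ = G ^ (l+1) * E₁
              + (((q ^ (l:ℤ) - q ^ (-(l:ℤ)))/(q - q⁻¹)) •
                  (G * (F₂ * H ^ (l-1) * Wel q (a + 2 - (l:ℝ)) K₁ K₁' K₂ K₂'))
                + F₂ * (H ^ l * Wel q (a+1-2*(l:ℝ)) K₁ K₁' K₂ K₂')) := by
              rw [mul_add, mul_smul_comm, ← mul_assoc, ← pow_succ', add_assoc]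
          _ = G ^ (l+1) * E₁
              + (((q ^ (l:ℤ) - q ^ (-(l:ℤ)))/(q - q⁻¹)) •
                  (F₂ * (H ^ l * Wel q (a + 2 - (l:ℝ)) K₁ K₁' K₂ K₂'))
                + F₂ * (H ^ l * Wel q (a+1-2*(l:ℝ)) K₁ K₁' K₂ K₂')) := by
              have : G * (F₂ * H ^ (l-1) * Wel q (a + 2 - (l:ℝ)) K₁ K₁' K₂ K₂')
                  = F₂ * (H ^ l * Wel q (a + 2 - (l:ℝ)) K₁ K₁' K₂ K₂') := by
                rw [← mul_assoc, ← mul_assoc, ← L2 hq0 hq1 h a, mul_assoc F₂ H,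
                  ← pow_succ', hl1, mul_assoc]
              rw [this]
          _ = G ^ (l+1) * E₁
              + F₂ * (H ^ l * (((q ^ (l:ℤ) - q ^ (-(l:ℤ)))/(q - q⁻¹)) •
                  Wel q (a + 2 - (l:ℝ)) K₁ K₁' K₂ K₂'
                + Wel q (a+1-2*(l:ℝ)) K₁ K₁' K₂ K₂')) := by
              rw [mul_add, mul_add, mul_smul_comm, mul_smul_comm]
          _ = _ := by rw [hW, mul_smul_comm, mul_smul_comm]
      rw [main]
      simp only [Wel, Nat.add_sub_cancel, mul_assoc]
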